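/- Let k ≥ 2 be an integer and let H_D be a diagonal graph on V = {(i,j) : 0 ≤ i,j ≤ k−1}. Then H_D has a connected component that contains at least one vertex from every row, or a connected component that contains at least one vertex from every column. -/
import Mathlib

open SimpleGraph

def IsDiagonalGraph (k : ℕ) (H : SimpleGraph (Fin k × Fin k)) : Prop :=
  (∀ (i j : ℕ) (hi : i + 1 < k) (hj : j + 1 < k),
    H.Adj (⟨i, by omega⟩, ⟨j, by omega⟩) (⟨i + 1, hi⟩, ⟨j + 1, hj⟩) ↔
      ¬ H.Adj (⟨i, by omega⟩, ⟨j + 1, hj⟩) (⟨i + 1, hi⟩, ⟨j, by omega⟩)) ∧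
  (∀ u v : Fin k × Fin k, H.Adj u v →
    ((u.1 : ℕ) + 1 = (v.1 : ℕ) ∨ (v.1 : ℕ) + 1 = (u.1 : ℕ)) ∧
    ((u.2 : ℕ) + 1 = (v.2 : ℕ) ∨ (v.2 : ℕ) + 1 = (u.2 : ℕ)))

namespace DiagProof

open scoped Classical

variable (k : ℕ) (H : SimpleGraph (Fin k × Fin k))

/-- sign of a real cell `(x,y)`, `0 ≤ x,y ≤ k-2`: `true` iff the `+` diagonal
`(x,y)-(x+1,y+1)` is an edge of `H`. -/
noncomputable def rsign (x y : ℤ) : Bool :=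
  if h : 0 ≤ x ∧ x ≤ (k:ℤ) - 2 ∧ 0 ≤ y ∧ y ≤ (k:ℤ) - 2 then
    if H.Adj (⟨x.toNat, by omega⟩, ⟨y.toNat, by omega⟩)
        (⟨x.toNat + 1, by omega⟩, ⟨y.toNat + 1, by omega⟩) then true else false
  else true

/-- sign of every (augmented) cell. -/
noncomputable def asign (x y : ℤ) : Bool :=
  if y = -1 then decide (x % 2 = 0)
  else if y = (k:ℤ) - 1 then decide ((x + k) % 2 = 0)
  else if x = -1 then decide (y % 2 = 1)
  else if x = (k:ℤ) - 1 then decide ((y + k) % 2 = 1)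
  else rsign k H x y

def inR (c : ℤ × ℤ) : Prop :=
  -1 ≤ c.1 ∧ c.1 ≤ (k:ℤ) - 1 ∧ -1 ≤ c.2 ∧ c.2 ≤ (k:ℤ) - 1

noncomputable def Haug : SimpleGraph (ℤ × ℤ) :=
  SimpleGraph.fromRel (fun u v => ∃ x y : ℤ, inR k (x, y) ∧
    ((asign k H x y = true ∧ u = (x, y) ∧ v = (x + 1, y + 1)) ∨
     (asign k H x y = false ∧ u = (x, y + 1) ∧ v = (x + 1, y))))

inductive Side | lf | rt | dn | up
deriving DecidableEq, Repr

open Side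

def opp : Side → Side | lf => rt | rt => lf | dn => up | up => dn

def dirv : Side → ℤ × ℤ | lf => (-1, 0) | rt => (1, 0) | dn => (0, -1) | up => (0, 1)

def partner : Bool → Side → Side
  | true, lf => up | true, up => lf | true, dn => rt | true, rt => dn
  | false, lf => dn | false, dn => lf | false, up => rt | false, rt => up

abbrev St := (ℤ × ℤ) × Side

noncomputable def stepF (s : St) : St :=
  ((s.1.1 + (dirv (partner (asign k H s.1.1 s.1.2) s.2)).1,
    s.1.2 + (dirv (partner (asign k H s.1.1 s.1.2) s.2)).2),
   opp (partner (asign k H s.1.1 s.1.2) s.2))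

noncomputable def stepB (s : St) : St :=
  ((s.1.1 - (dirv (opp s.2)).1, s.1.2 - (dirv (opp s.2)).2),
   partner (asign k H (s.1.1 - (dirv (opp s.2)).1) (s.1.2 - (dirv (opp s.2)).2)) (opp s.2))

noncomputable def rev (s : St) : St := (s.1, partner (asign k H s.1.1 s.1.2) s.2)

noncomputable def f (n : ℕ) : St := (stepF k H)^[n] ((-1, 0), lf)

lemma partner_partner (b : Bool) (S : Side) : partner b (partner b S) = S := by
  cases b <;> cases S <;> rfl

lemma opp_opp (S : Side) : opp (opp S) = S := by cases S <;> rfl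

lemma stepB_stepF (s : St) : stepB k H (stepF k H s) = s := by
  obtain ⟨⟨x, y⟩, S⟩ := s
  cases hb : asign k H x y <;> cases S <;>
    simp [stepF, stepB, hb, partner, opp, dirv] <;> simp [partner]

lemma stepF_rev_stepF (s : St) : stepF k H (rev k H (stepF k H s)) = rev k H s := by
  obtain ⟨⟨x, y⟩, S⟩ := s
  cases hb : asign k H x y <;> cases S <;>
    simp [stepF, rev, hb, partner, opp, dirv] <;>
    cases hb2 : asign k H _ _ <;> simp [partner, opp, dirv, hb]



lemma haug_adj_plus {x y : ℤ} (h : inR k (x, y)) (hs : asign k H x y = true) :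
    (Haug k H).Adj (x, y) (x + 1, y + 1) :=
  ⟨by simp [Prod.ext_iff], Or.inl ⟨x, y, h, Or.inl ⟨hs, rfl, rfl⟩⟩⟩

lemma haug_adj_minus {x y : ℤ} (h : inR k (x, y)) (hs : asign k H x y = false) :
    (Haug k H).Adj (x, y + 1) (x + 1, y) :=
  ⟨by simp [Prod.ext_iff], Or.inl ⟨x, y, h, Or.inr ⟨hs, rfl, rfl⟩⟩⟩

lemma haug_adj_elim {u v : ℤ × ℤ} (h : (Haug k H).Adj u v) :
    ∃ x y : ℤ, inR k (x, y) ∧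
      ((asign k H x y = true ∧ ((u = (x, y) ∧ v = (x + 1, y + 1)) ∨ (v = (x, y) ∧ u = (x + 1, y + 1)))) ∨
       (asign k H x y = false ∧ ((u = (x, y + 1) ∧ v = (x + 1, y)) ∨ (v = (x, y + 1) ∧ u = (x + 1, y))))) := by
  obtain ⟨-, h | h⟩ := h <;> obtain ⟨x, y, hr, hc⟩ := h
  · exact ⟨x, y, hr, by tauto⟩
  · exact ⟨x, y, hr, by tauto⟩

lemma haug_adj_delta {u v : ℤ × ℤ} (h : (Haug k H).Adj u v) :
    (v.1 = u.1 + 1 ∨ u.1 = v.1 + 1) ∧ (v.2 = u.2 + 1 ∨ u.2 = v.2 + 1) := by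
  obtain ⟨x, y, -, ⟨-, h | h⟩ | ⟨-, h | h⟩⟩ := haug_adj_elim k H h <;>
    obtain ⟨h1, h2⟩ := h <;> subst h1 <;> subst h2 <;> simp

lemma haug_adj_parity {u v : ℤ × ℤ} (h : (Haug k H).Adj u v) :
    (u.1 + u.2) % 2 = (v.1 + v.2) % 2 := by
  obtain ⟨x, y, -, ⟨-, h | h⟩ | ⟨-, h | h⟩⟩ := haug_adj_elim k H h <;>
    obtain ⟨h1, h2⟩ := h <;> subst h1 <;> subst h2 <;> simp <;> omega

lemma haug_reach_parity {u v : ℤ × ℤ} (h : (Haug k H).Reachable u v) :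
    (u.1 + u.2) % 2 = (v.1 + v.2) % 2 := by
  obtain ⟨w⟩ := h
  induction w with
  | nil => rfl
  | cons h p ih => rw [haug_adj_parity k H h]; exact ih

variable {k H} (hH : IsDiagonalGraph k H)

include hH

lemma real_plus {x y : ℤ} (hx : 0 ≤ x) (hx2 : x ≤ (k:ℤ) - 2) (hy : 0 ≤ y) (hy2 : y ≤ (k:ℤ) - 2)
    (hs : rsign k H x y = true) :
    ∃ a b : Fin k × Fin k, (a.1:ℤ) = x ∧ (a.2:ℤ) = y ∧ (b.1:ℤ) = x + 1 ∧ (b.2:ℤ) = y + 1 ∧ H.Adj a b := by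
  rw [rsign, dif_pos ⟨hx, hx2, hy, hy2⟩] at hs
  split at hs
  · next had =>
    exact ⟨_, _, by simpa using Int.toNat_of_nonneg hx, by simpa using Int.toNat_of_nonneg hy,
      by push_cast; omega, by push_cast; omega, had⟩
  · simp at hs

lemma real_minus {x y : ℤ} (hx : 0 ≤ x) (hx2 : x ≤ (k:ℤ) - 2) (hy : 0 ≤ y) (hy2 : y ≤ (k:ℤ) - 2)
    (hs : rsign k H x y = false) :
    ∃ a b : Fin k × Fin k, (a.1:ℤ) = x ∧ (a.2:ℤ) = y + 1 ∧ (b.1:ℤ) = x + 1 ∧ (b.2:ℤ) = y ∧ H.Adj a b := by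
  rw [rsign, dif_pos ⟨hx, hx2, hy, hy2⟩] at hs
  split at hs
  · simp at hs
  · next had =>
    have h2 : H.Adj (⟨x.toNat, by omega⟩, ⟨y.toNat + 1, by omega⟩)
        (⟨x.toNat + 1, by omega⟩, ⟨y.toNat, by omega⟩) := by
      by_contra hn
      exact had ((hH.1 x.toNat y.toNat (by omega) (by omega)).mpr hn)
    exact ⟨_, _, by simpa using Int.toNat_of_nonneg hx, by push_cast; omega,
      by push_cast; omega, by simpa using Int.toNat_of_nonneg hy, h2⟩


lemma odd_adj {u v : ℤ × ℤ} (h : (Haug k H).Adj u v) (hp : (u.1 + u.2) % 2 = 1) :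
    (u.2 ≤ 0 ∧ v.2 ≤ 0) ∨ ((k:ℤ) - 1 ≤ u.2 ∧ (k:ℤ) - 1 ≤ v.2) ∨
    (∃ a b : Fin k × Fin k, (a.1:ℤ) = u.1 ∧ (a.2:ℤ) = u.2 ∧ (b.1:ℤ) = v.1 ∧ (b.2:ℤ) = v.2 ∧ H.Adj a b) := by
  obtain ⟨x, y, hr, hc⟩ := haug_adj_elim k H h
  obtain ⟨hr1, hr2, hr3, hr4⟩ := hr
  by_cases hy1 : y = -1
  · subst hy1
    rcases hc with ⟨-, h | h⟩ | ⟨-, h | h⟩ <;> obtain ⟨e1, e2⟩ := h <;> subst e1 <;> subst e2 <;>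
      exact Or.inl (by simp)
  · by_cases hyN : y = (k:ℤ) - 1
    · subst hyN
      rcases hc with ⟨-, h | h⟩ | ⟨-, h | h⟩ <;> obtain ⟨e1, e2⟩ := h <;> subst e1 <;> subst e2 <;>
        exact Or.inr (Or.inl (by simp))
    · by_cases hx1 : x = -1
      · exfalso
        subst hx1
        rcases hc with ⟨hs, h | h⟩ | ⟨hs, h | h⟩ <;> obtain ⟨e1, e2⟩ := h <;> subst e1 <;> subst e2 <;>
          rw [asign, if_neg hy1, if_neg hyN, if_pos rfl] at hs <;> simp at hs hp <;> omega
      · by_cases hxN : x = (k:ℤ) - 1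
        · exfalso
          subst hxN
          rcases hc with ⟨hs, h | h⟩ | ⟨hs, h | h⟩ <;> obtain ⟨e1, e2⟩ := h <;> subst e1 <;> subst e2 <;>
            rw [asign, if_neg hy1, if_neg hyN, if_neg (by omega), if_pos rfl] at hs <;>
            simp at hs hp <;> omega
        · refine Or.inr (Or.inr ?_)
          have hsr : asign k H x y = rsign k H x y := by
            rw [asign, if_neg hy1, if_neg hyN, if_neg hx1, if_neg hxN]
          rcases hc with ⟨hs, h | h⟩ | ⟨hs, h | h⟩ <;> obtain ⟨e1, e2⟩ := h <;> subst e1 <;> subst e2 <;>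
            rw [hsr] at hs
          · obtain ⟨a, b, c1, c2, c3, c4, hab⟩ := real_plus hH (by omega) (by omega) (by omega) (by omega) hs
            exact ⟨a, b, c1, c2, c3, c4, hab⟩
          · obtain ⟨a, b, c1, c2, c3, c4, hab⟩ := real_plus hH (by omega) (by omega) (by omega) (by omega) hs
            exact ⟨b, a, c3, c4, c1, c2, hab.symm⟩
          · obtain ⟨a, b, c1, c2, c3, c4, hab⟩ := real_minus hH (by omega) (by omega) (by omega) (by omega) hs
            exact ⟨a, b, c1, c2, c3, c4, hab⟩
          · obtain ⟨a, b, c1, c2, c3, c4, hab⟩ := real_minus hH (by omega) (by omega) (by omega) (by omega) hs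
            exact ⟨b, a, c3, c4, c1, c2, hab.symm⟩

lemma even_adj {u v : ℤ × ℤ} (h : (Haug k H).Adj u v) (hp : (u.1 + u.2) % 2 = 0) :
    (u.1 ≤ 0 ∧ v.1 ≤ 0) ∨ ((k:ℤ) - 1 ≤ u.1 ∧ (k:ℤ) - 1 ≤ v.1) ∨
    (∃ a b : Fin k × Fin k, (a.1:ℤ) = u.1 ∧ (a.2:ℤ) = u.2 ∧ (b.1:ℤ) = v.1 ∧ (b.2:ℤ) = v.2 ∧ H.Adj a b) := by
  obtain ⟨x, y, hr, hc⟩ := haug_adj_elim k H h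
  obtain ⟨hr1, hr2, hr3, hr4⟩ := hr
  by_cases hy1 : y = -1
  · exfalso
    subst hy1
    rcases hc with ⟨hs, h | h⟩ | ⟨hs, h | h⟩ <;> obtain ⟨e1, e2⟩ := h <;> subst e1 <;> subst e2 <;>
      rw [asign, if_pos rfl] at hs <;> simp at hs hp <;> omega
  · by_cases hyN : y = (k:ℤ) - 1
    · exfalso
      subst hyN
      rcases hc with ⟨hs, h | h⟩ | ⟨hs, h | h⟩ <;> obtain ⟨e1, e2⟩ := h <;> subst e1 <;> subst e2 <;>
        rw [asign, if_neg (by omega), if_pos rfl] at hs <;> simp at hs hp <;> omega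
    · by_cases hx1 : x = -1
      · subst hx1
        rcases hc with ⟨-, h | h⟩ | ⟨-, h | h⟩ <;> obtain ⟨e1, e2⟩ := h <;> subst e1 <;> subst e2 <;>
          exact Or.inl (by simp)
      · by_cases hxN : x = (k:ℤ) - 1
        · subst hxN
          rcases hc with ⟨-, h | h⟩ | ⟨-, h | h⟩ <;> obtain ⟨e1, e2⟩ := h <;> subst e1 <;> subst e2 <;>
            exact Or.inr (Or.inl (by simp))
        · refine Or.inr (Or.inr ?_)
          have hsr : asign k H x y = rsign k H x y := by
            rw [asign, if_neg hy1, if_neg hyN, if_neg hx1, if_neg hxN]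
          rcases hc with ⟨hs, h | h⟩ | ⟨hs, h | h⟩ <;> obtain ⟨e1, e2⟩ := h <;> subst e1 <;> subst e2 <;>
            rw [hsr] at hs
          · obtain ⟨a, b, c1, c2, c3, c4, hab⟩ := real_plus hH (by omega) (by omega) (by omega) (by omega) hs
            exact ⟨a, b, c1, c2, c3, c4, hab⟩
          · obtain ⟨a, b, c1, c2, c3, c4, hab⟩ := real_plus hH (by omega) (by omega) (by omega) (by omega) hs
            exact ⟨b, a, c3, c4, c1, c2, hab.symm⟩
          · obtain ⟨a, b, c1, c2, c3, c4, hab⟩ := real_minus hH (by omega) (by omega) (by omega) (by omega) hs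
            exact ⟨a, b, c1, c2, c3, c4, hab⟩
          · obtain ⟨a, b, c1, c2, c3, c4, hab⟩ := real_minus hH (by omega) (by omega) (by omega) (by omega) hs
            exact ⟨b, a, c3, c4, c1, c2, hab.symm⟩


omit hH

variable (k H) in
def Av : ℤ × ℤ := (-1, 1)

def Bv : ℤ × ℤ := (0, -1)

abbrev d1 (s : St) : ℤ × ℤ :=
  match s.2 with
  | Side.lf => s.1
  | Side.rt => (s.1.1 + 1, s.1.2)
  | Side.dn => s.1
  | Side.up => (s.1.1, s.1.2 + 1)

abbrev d2 (s : St) : ℤ × ℤ :=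
  match s.2 with
  | Side.lf => (s.1.1, s.1.2 + 1)
  | Side.rt => (s.1.1 + 1, s.1.2 + 1)
  | Side.dn => (s.1.1 + 1, s.1.2)
  | Side.up => (s.1.1 + 1, s.1.2 + 1)

variable (k H) in
abbrev Inv (s : St) : Prop :=
  ((Haug k H).Reachable Av (d1 s) ∧ (Haug k H).Reachable Bv (d2 s)) ∨
  ((Haug k H).Reachable Av (d2 s) ∧ (Haug k H).Reachable Bv (d1 s))

lemma inv_step {s : St} (hin : inR k s.1) (hi : Inv k H s) : Inv k H (stepF k H s) := by
  obtain ⟨⟨x, y⟩, S⟩ := s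
  cases hb : asign k H x y <;> cases S
  · -- false, lf
    have e := haug_adj_minus k H hin hb
    have hst : stepF k H ((x, y), Side.lf) = ((x, y - 1), Side.up) := by
      simp [stepF, hb, partner, opp, dirv, Prod.ext_iff] <;> omega
    rw [hst]
    simp only [Inv, d1, d2] at hi ⊢
    rcases hi with ⟨hA, hB⟩ | ⟨hA, hB⟩
    · exact Or.inl ⟨by simpa using hA, by simpa using hB.trans e.reachable⟩
    · exact Or.inr ⟨by simpa using hA.trans e.reachable, by simpa using hB⟩
  · -- false, rt
    have e := haug_adj_minus k H hin hb
    have hst : stepF k H ((x, y), Side.rt) = ((x, y + 1), Side.dn) := by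
      simp [stepF, hb, partner, opp, dirv, Prod.ext_iff] <;> omega
    rw [hst]
    simp only [Inv, d1, d2] at hi ⊢
    rcases hi with ⟨hA, hB⟩ | ⟨hA, hB⟩
    · exact Or.inl ⟨by simpa using hA.trans e.symm.reachable, by simpa using hB⟩
    · exact Or.inr ⟨by simpa using hA, by simpa using hB.trans e.symm.reachable⟩
  · -- false, dn
    have e := haug_adj_minus k H hin hb
    have hst : stepF k H ((x, y), Side.dn) = ((x - 1, y), Side.rt) := by
      simp [stepF, hb, partner, opp, dirv, Prod.ext_iff] <;> omega
    rw [hst]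
    simp only [Inv, d1, d2] at hi ⊢
    rcases hi with ⟨hA, hB⟩ | ⟨hA, hB⟩
    · exact Or.inl ⟨by simpa using hA, by simpa using hB.trans e.symm.reachable⟩
    · exact Or.inr ⟨by simpa using hA.trans e.symm.reachable, by simpa using hB⟩
  · -- false, up
    have e := haug_adj_minus k H hin hb
    have hst : stepF k H ((x, y), Side.up) = ((x + 1, y), Side.lf) := by
      simp [stepF, hb, partner, opp, dirv, Prod.ext_iff] <;> omega
    rw [hst]
    simp only [Inv, d1, d2] at hi ⊢
    rcases hi with ⟨hA, hB⟩ | ⟨hA, hB⟩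
    · exact Or.inl ⟨by simpa using hA.trans e.reachable, by simpa using hB⟩
    · exact Or.inr ⟨by simpa using hA, by simpa using hB.trans e.reachable⟩
  · -- true, lf
    have e := haug_adj_plus k H hin hb
    have hst : stepF k H ((x, y), Side.lf) = ((x, y + 1), Side.dn) := by
      simp [stepF, hb, partner, opp, dirv, Prod.ext_iff] <;> omega
    rw [hst]
    simp only [Inv, d1, d2] at hi ⊢
    rcases hi with ⟨hA, hB⟩ | ⟨hA, hB⟩
    · exact Or.inr ⟨by simpa using hA.trans e.reachable, by simpa using hB⟩
    · exact Or.inl ⟨by simpa using hA, by simpa using hB.trans e.reachable⟩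
  · -- true, rt
    have e := haug_adj_plus k H hin hb
    have hst : stepF k H ((x, y), Side.rt) = ((x, y - 1), Side.up) := by
      simp [stepF, hb, partner, opp, dirv, Prod.ext_iff] <;> omega
    rw [hst]
    simp only [Inv, d1, d2] at hi ⊢
    rcases hi with ⟨hA, hB⟩ | ⟨hA, hB⟩
    · exact Or.inr ⟨by simpa using hA, by simpa using hB.trans e.symm.reachable⟩
    · exact Or.inl ⟨by simpa using hA.trans e.symm.reachable, by simpa using hB⟩
  · -- true, dn
    have e := haug_adj_plus k H hin hb
    have hst : stepF k H ((x, y), Side.dn) = ((x + 1, y), Side.lf) := by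
      simp [stepF, hb, partner, opp, dirv, Prod.ext_iff] <;> omega
    rw [hst]
    simp only [Inv, d1, d2] at hi ⊢
    rcases hi with ⟨hA, hB⟩ | ⟨hA, hB⟩
    · exact Or.inr ⟨by simpa using hA.trans e.reachable, by simpa using hB⟩
    · exact Or.inl ⟨by simpa using hA, by simpa using hB.trans e.reachable⟩
  · -- true, up
    have e := haug_adj_plus k H hin hb
    have hst : stepF k H ((x, y), Side.up) = ((x - 1, y), Side.rt) := by
      simp [stepF, hb, partner, opp, dirv, Prod.ext_iff] <;> omega
    rw [hst]
    simp only [Inv, d1, d2] at hi ⊢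
    rcases hi with ⟨hA, hB⟩ | ⟨hA, hB⟩
    · exact Or.inr ⟨by simpa using hA, by simpa using hB.trans e.symm.reachable⟩
    · exact Or.inl ⟨by simpa using hA.trans e.symm.reachable, by simpa using hB⟩

lemma f_succ (n : ℕ) : f k H (n + 1) = stepF k H (f k H n) :=
  Function.iterate_succ_apply' _ _ _

lemma stepF_injective : Function.Injective (stepF k H) :=
  Function.LeftInverse.injective (stepB_stepF k H)

instance : Fintype Side := ⟨⟨{Side.lf, Side.rt, Side.dn, Side.up}, by decide⟩, fun s => by cases s <;> decide⟩

lemma exists_exit (hk : 2 ≤ k) : ∃ n, ¬ inR k (f k H (n + 1)).1 := by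
  by_contra hc
  push_neg at hc
  have hall : ∀ n, inR k (f k H n).1 := by
    intro n
    cases n with
    | zero =>
      show inR k ((-1 : ℤ), (0 : ℤ))
      refine ⟨by omega, by push_cast; omega, by omega, by push_cast; omega⟩
    | succ m => exact hc m
  have hfin : Finite {s : St // inR k s.1} := by
    have hsub : {s : St | inR k s.1} ⊆
        (Set.Icc ((-1 : ℤ), (-1 : ℤ)) ((k:ℤ) - 1, (k:ℤ) - 1)) ×ˢ (Set.univ : Set Side) := by
      rintro ⟨⟨x, y⟩, S⟩ hs
      obtain ⟨h1, h2, h3, h4⟩ := hs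
      exact ⟨⟨⟨h1, h3⟩, ⟨h2, h4⟩⟩, trivial⟩
    exact (Set.Finite.subset ((Set.finite_Icc _ _).prod Set.finite_univ) hsub).to_subtype
  obtain ⟨m, n, hmn, he⟩ :=
    Finite.exists_ne_map_eq_of_infinite (fun n : ℕ => (⟨f k H n, hall n⟩ : {s : St // inR k s.1}))
  have he' : f k H m = f k H n := congrArg Subtype.val he
  have key : ∀ a b : ℕ, a < b → f k H a = f k H b → False := by
    intro a b hab heq
    have h0 : f k H 0 = f k H (b - a) := by
      apply (stepF_injective (k := k) (H := H)).iterate a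
      show (stepF k H)^[a] (f k H 0) = (stepF k H)^[a] (f k H (b - a))
      have e2 : (stepF k H)^[a] (f k H (b - a)) = f k H (a + (b - a)) :=
        (Function.iterate_add_apply _ a (b - a) _).symm
      rw [e2, show a + (b - a) = b from by omega]
      exact heq
    have h1 : stepF k H (f k H (b - a - 1)) = ((-1, 0), Side.lf) := by
      rw [← f_succ, show b - a - 1 + 1 = b - a from by omega, ← h0]; rfl
    have h2 := congrArg (stepB k H) h1
    rw [stepB_stepF] at h2
    have h3 := hall (b - a - 1)
    rw [h2] at h3
    simp only [stepB, opp, dirv, inR] at h3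
    omega
  rcases Nat.lt_or_ge m n with h | h
  · exact key m n h he'
  · exact key n m (by omega) he'.symm


lemma asign_bot (x : ℤ) : asign k H x (-1) = decide (x % 2 = 0) := by
  rw [asign, if_pos rfl]

lemma asign_top (hk : 2 ≤ k) (x : ℤ) : asign k H x ((k:ℤ) - 1) = decide ((x + k) % 2 = 0) := by
  rw [asign, if_neg (by omega), if_pos rfl]

lemma asign_left (hk : 2 ≤ k) {y : ℤ} (hy1 : y ≠ -1) (hy2 : y ≠ (k:ℤ) - 1) :
    asign k H (-1) y = decide (y % 2 = 1) := by
  rw [asign, if_neg hy1, if_neg hy2, if_pos rfl]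

lemma asign_right (hk : 2 ≤ k) {y : ℤ} (hy1 : y ≠ -1) (hy2 : y ≠ (k:ℤ) - 1) :
    asign k H ((k:ℤ) - 1) y = decide ((y + k) % 2 = 1) := by
  rw [asign, if_neg hy1, if_neg hy2, if_neg (by omega), if_pos rfl]

lemma asign_real (hk : 2 ≤ k) {x y : ℤ} (hx1 : x ≠ -1) (hx2 : x ≠ (k:ℤ) - 1)
    (hy1 : y ≠ -1) (hy2 : y ≠ (k:ℤ) - 1) :
    asign k H x y = rsign k H x y := by
  rw [asign, if_neg hy1, if_neg hy2, if_neg hx1, if_neg hx2]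

lemma back_step {n m : ℕ} (hall : ∀ j, j ≤ n → inR k (f k H j).1) (hm : 1 ≤ m) (hmn : m ≤ n)
    {s : St} (hs : f k H m = s) :
    f k H (m - 1) = stepB k H s ∧ inR k (stepB k H s).1 := by
  have h1 : f k H (m - 1) = stepB k H s := by
    have h2 : stepB k H (f k H (m - 1 + 1)) = f k H (m - 1) := by rw [f_succ, stepB_stepF]
    rw [show m - 1 + 1 = m from by omega, hs] at h2
    exact h2.symm
  exact ⟨h1, h1 ▸ hall (m - 1) (by omega)⟩

lemma no_return (hk : 2 ≤ k) {n : ℕ} : f k H n ≠ ((-1, 0), Side.dn) := by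
  intro heq
  have hrev0 : rev k H (f k H n) = f k H 0 := by
    rw [heq]
    have ha : asign k H (-1) 0 = false := by
      rw [asign_left hk (by omega) (by omega)]; decide
    show ((-1, 0), partner (asign k H (-1) 0) Side.dn) = _
    rw [ha]; rfl
  have hpal : ∀ m, m ≤ n → rev k H (f k H (n - m)) = f k H m := by
    intro m
    induction m with
    | zero => intro _; simpa using hrev0
    | succ j ih =>
      intro hj
      have e0 : stepF k H (f k H (n - (j + 1))) = f k H (n - j) := by
        rw [← f_succ, show n - (j + 1) + 1 = n - j from by omega]
      have e1 := stepF_rev_stepF k H (f k H (n - (j + 1)))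
      rw [e0, ih (by omega)] at e1
      rw [← e1, ← f_succ]
  have nofix : ∀ s : St, stepF k H s ≠ rev k H s := by
    rintro ⟨⟨x, y⟩, S⟩ hfix
    have hc := congrArg (fun s : St => s.1) hfix
    cases hb : asign k H x y <;> cases S <;>
      simp [stepF, rev, hb, partner, opp, dirv, Prod.ext_iff] at hc <;> omega
  have norev : ∀ s : St, rev k H s ≠ s := by
    rintro ⟨⟨x, y⟩, S⟩ hfix
    have hc := congrArg (fun s : St => s.2) hfix
    cases hb : asign k H x y <;> cases S <;> simp [rev, hb, partner] at hc
  rcases Nat.even_or_odd n with ⟨t, ht⟩ | ⟨t, ht⟩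
  · have := hpal t (by omega)
    rw [show n - t = t from by omega] at this
    exact norev _ this
  · have := hpal (t + 1) (by omega)
    rw [show n - (t + 1) = t from by omega] at this
    rw [f_succ] at this
    exact nofix _ this.symm

lemma inv_zero (hk : 2 ≤ k) : Inv k H (f k H 0) := by
  have hin : inR k ((-1 : ℤ), (-1 : ℤ)) := ⟨by omega, by push_cast; omega, by omega, by push_cast; omega⟩
  have ha : asign k H (-1) (-1) = false := by rw [asign_bot]; decide
  have e := haug_adj_minus k H hin ha
  refine Or.inr ⟨Reachable.refl _, ?_⟩
  show (Haug k H).Reachable Bv (-1, -1 + 1)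
  exact e.symm.reachable


lemma f_zero : f k H 0 = ((-1, 0), Side.lf) := rfl

lemma exit_class (hk : 2 ≤ k) :
    (∃ v : ℤ × ℤ, (Haug k H).Reachable Bv v ∧ (k:ℤ) - 1 ≤ v.2) ∨
    (∃ v : ℤ × ℤ, (Haug k H).Reachable Av v ∧ (k:ℤ) - 1 ≤ v.1) := by
  have hexists := exists_exit (k := k) (H := H) hk
  set n₀ := Nat.find hexists with hn0
  have hexit : ¬ inR k (f k H (n₀ + 1)).1 := Nat.find_spec hexists
  have hall : ∀ j, j ≤ n₀ → inR k (f k H j).1 := by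
    intro j hj
    cases j with
    | zero =>
      show inR k ((-1 : ℤ), (0 : ℤ))
      exact ⟨by omega, by push_cast; omega, by omega, by push_cast; omega⟩
    | succ i => exact not_not.mp (Nat.find_min hexists (by omega))
  have hinv : ∀ m, m ≤ n₀ + 1 → Inv k H (f k H m) := by
    intro m hm
    induction m with
    | zero => exact inv_zero hk
    | succ i ih =>
      rw [f_succ]
      exact inv_step (hall i (by omega)) (ih (by omega))
  obtain ⟨x, y, S, hfn⟩ : ∃ x y S, f k H n₀ = ((x, y), S) :=
    ⟨(f k H n₀).1.1, (f k H n₀).1.2, (f k H n₀).2, rfl⟩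
  have hin : inR k (x, y) := by
    have := hall n₀ le_rfl; rw [hfn] at this; exact this
  obtain ⟨hx1, hx2, hy1, hy2⟩ := hin
  simp only at hx1 hx2 hy1 hy2
  have hout : ¬ inR k (stepF k H ((x, y), S)).1 := by rw [← hfn, ← f_succ]; exact hexit
  have hIe : Inv k H (stepF k H ((x, y), S)) := by rw [← hfn, ← f_succ]; exact hinv (n₀ + 1) le_rfl
  have hApar : ∀ v : ℤ × ℤ, (Haug k H).Reachable Av v → (v.1 + v.2) % 2 = 0 := by
    intro v h
    have := haug_reach_parity k H h
    simpa [Av] using this.symm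
  have hBpar : ∀ v : ℤ × ℤ, (Haug k H).Reachable Bv v → (v.1 + v.2) % 2 = 1 := by
    intro v h
    have := haug_reach_parity k H h
    simpa [Bv] using this.symm
  cases hb : asign k H x y <;> cases S
  · -- false, lf : exit dn, y = -1, dead
    have hy : y = -1 := by
      simp only [stepF, hb, partner, opp, dirv, inR] at hout; push_neg at hout; omega
    subst hy
    have hbx : ¬ (x % 2 = 0) := by rw [asign_bot] at hb; simpa using hb
    rcases Nat.eq_zero_or_pos n₀ with h0 | hpos
    · rw [h0, f_zero] at hfn
      simp [Prod.ext_iff] at hfn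
    · obtain ⟨hprev, hprevin⟩ := back_step hall hpos le_rfl hfn
      simp only [stepB, opp, dirv] at hprev hprevin
      obtain ⟨a1, a2, a3, a4⟩ := hprevin
      simp only at a1 a2 a3 a4
      have ha' : asign k H (x - 1) (-1 - 0) = true := by
        rw [show (-1 - 0 : ℤ) = -1 from rfl, asign_bot]; simp; omega
      rw [ha'] at hprev
      simp only [partner] at hprev
      rcases Nat.eq_zero_or_pos (n₀ - 1) with h1 | hpos1
      · rw [h1, f_zero] at hprev
        simp [Prod.ext_iff] at hprev
      · obtain ⟨hprev2, hprevin2⟩ := back_step hall hpos1 (by omega) hprev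
        simp only [stepB, opp, dirv] at hprevin2
        obtain ⟨b1, b2, b3, b4⟩ := hprevin2
        simp only at b1 b2 b3 b4
        omega
  · -- false, rt : exit up, y = k-1, dead
    have hy : y = (k:ℤ) - 1 := by
      simp only [stepF, hb, partner, opp, dirv, inR] at hout; push_neg at hout; omega
    subst hy
    rcases Nat.eq_zero_or_pos n₀ with h0 | hpos
    · rw [h0, f_zero] at hfn
      simp [Prod.ext_iff] at hfn
    · obtain ⟨hprev, hprevin⟩ := back_step hall hpos le_rfl hfn
      simp only [stepB, opp, dirv] at hprev hprevin
      obtain ⟨a1, a2, a3, a4⟩ := hprevin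
      simp only at a1 a2 a3 a4
      have hbx : ¬ ((x + k) % 2 = 0) := by rw [asign_top hk] at hb; simpa using hb
      have ha' : asign k H (x - -1) ((k:ℤ) - 1 - 0) = true := by
        rw [show ((k:ℤ) - 1 - 0) = (k:ℤ) - 1 from by ring, asign_top hk]; simp; omega
      rw [ha'] at hprev
      simp only [partner] at hprev
      rcases Nat.eq_zero_or_pos (n₀ - 1) with h1 | hpos1
      · rw [h1, f_zero] at hprev
        simp [Prod.ext_iff] at hprev
      · obtain ⟨hprev2, hprevin2⟩ := back_step hall hpos1 (by omega) hprev
        simp only [stepB, opp, dirv] at hprevin2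
        obtain ⟨b1, b2, b3, b4⟩ := hprevin2
        simp only at b1 b2 b3 b4
        omega
  · -- false, dn : exit lf, x = -1
    have hx : x = -1 := by
      simp only [stepF, hb, partner, opp, dirv, inR] at hout; push_neg at hout; omega
    subst hx
    by_cases hym : y = -1
    · subst hym
      rcases Nat.eq_zero_or_pos n₀ with h0 | hpos
      · rw [h0, f_zero] at hfn
        simp [Prod.ext_iff] at hfn
      · obtain ⟨hprev, hprevin⟩ := back_step hall hpos le_rfl hfn
        simp only [stepB, opp, dirv] at hprevin
        obtain ⟨a1, a2, a3, a4⟩ := hprevin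
        simp only at a1 a2 a3 a4
        omega
    · by_cases hyN : y = (k:ℤ) - 1
      · -- OPENING #2 : row output
        subst hyN
        have hkpar : ¬ ((k:ℤ) - 1 + k) % 2 = 0 → True := fun _ => trivial
        have hbx : ¬ (((-1:ℤ) + k) % 2 = 0) := by rw [asign_top hk] at hb; simpa using hb
        simp only [stepF, hb, partner, opp, dirv] at hIe
        simp only [Inv, d1, d2] at hIe
        rcases hIe with ⟨hA, hB⟩ | ⟨hA, hB⟩
        · exact Or.inl ⟨_, hB, by simp <;> omega⟩
        · exfalso
          have := hApar _ hA
          simp only at this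
          omega
      · have hbx : ¬ (y % 2 = 1) := by rw [asign_left hk hym hyN] at hb; simpa using hb
        by_cases hy0 : y = 0
        · subst hy0
          exact absurd hfn (no_return hk)
        · rcases Nat.eq_zero_or_pos n₀ with h0 | hpos
          · rw [h0, f_zero] at hfn
            simp [Prod.ext_iff] at hfn
          · obtain ⟨hprev, hprevin⟩ := back_step hall hpos le_rfl hfn
            simp only [stepB, opp, dirv] at hprev hprevin
            have ha' : asign k H (-1 - 0) (y - 1) = true := by
              rw [show (-1 - 0 : ℤ) = -1 from rfl, asign_left hk (by omega) (by omega)]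
              simp; omega
            rw [ha'] at hprev
            simp only [partner] at hprev
            rcases Nat.eq_zero_or_pos (n₀ - 1) with h1 | hpos1
            · rw [h1, f_zero] at hprev
              simp [Prod.ext_iff] at hprev
              omega
            · obtain ⟨hprev2, hprevin2⟩ := back_step hall hpos1 (by omega) hprev
              simp only [stepB, opp, dirv] at hprevin2
              obtain ⟨b1, b2, b3, b4⟩ := hprevin2
              simp only at b1 b2 b3 b4
              omega
  · -- false, up : exit rt, x = k-1
    have hx : x = (k:ℤ) - 1 := by
      simp only [stepF, hb, partner, opp, dirv, inR] at hout; push_neg at hout; omega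
    subst hx
    by_cases hym : y = -1
    · -- OPENING #5 : column output
      subst hym
      have hbx : ¬ (((k:ℤ) - 1) % 2 = 0) := by rw [asign_bot] at hb; simpa using hb
      simp only [stepF, hb, partner, opp, dirv] at hIe
      simp only [Inv, d1, d2] at hIe
      rcases hIe with ⟨hA, hB⟩ | ⟨hA, hB⟩
      · exfalso
        have := hApar _ hA
        simp only at this
        omega
      · exact Or.inr ⟨_, hA, by simp <;> omega⟩
    · by_cases hyN : y = (k:ℤ) - 1
      · subst hyN
        rcases Nat.eq_zero_or_pos n₀ with h0 | hpos
        · rw [h0, f_zero] at hfn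
          simp [Prod.ext_iff] at hfn
        · obtain ⟨hprev, hprevin⟩ := back_step hall hpos le_rfl hfn
          simp only [stepB, opp, dirv] at hprevin
          obtain ⟨a1, a2, a3, a4⟩ := hprevin
          simp only at a1 a2 a3 a4
          omega
      · have hbx : ¬ ((y + k) % 2 = 1) := by rw [asign_right hk hym hyN] at hb; simpa using hb
        by_cases hyk2 : y = (k:ℤ) - 2
        · -- OPENING #4 : column output
          subst hyk2
          simp only [stepF, hb, partner, opp, dirv] at hIe
          simp only [Inv, d1, d2] at hIe
          rcases hIe with ⟨hA, hB⟩ | ⟨hA, hB⟩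
          · exact Or.inr ⟨_, hA, by simp <;> omega⟩
          · exfalso
            have := hApar _ hA
            simp only at this
            omega
        · rcases Nat.eq_zero_or_pos n₀ with h0 | hpos
          · rw [h0, f_zero] at hfn
            simp [Prod.ext_iff] at hfn
          · obtain ⟨hprev, hprevin⟩ := back_step hall hpos le_rfl hfn
            simp only [stepB, opp, dirv] at hprev hprevin
            have ha' : asign k H ((k:ℤ) - 1 - 0) (y - -1) = true := by
              rw [show ((k:ℤ) - 1 - 0) = (k:ℤ) - 1 from by ring,
                asign_right hk (by omega) (by omega)]
              simp; omega
            rw [ha'] at hprev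
            simp only [partner] at hprev
            rcases Nat.eq_zero_or_pos (n₀ - 1) with h1 | hpos1
            · rw [h1, f_zero] at hprev
              simp [Prod.ext_iff] at hprev
            · obtain ⟨hprev2, hprevin2⟩ := back_step hall hpos1 (by omega) hprev
              simp only [stepB, opp, dirv] at hprevin2
              obtain ⟨b1, b2, b3, b4⟩ := hprevin2
              simp only at b1 b2 b3 b4
              omega
  · -- true, lf : exit up, y = k-1, dead
    have hy : y = (k:ℤ) - 1 := by
      simp only [stepF, hb, partner, opp, dirv, inR] at hout; push_neg at hout; omega
    subst hy
    have hbx : (x + k) % 2 = 0 := by rw [asign_top hk] at hb; simpa using hb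
    rcases Nat.eq_zero_or_pos n₀ with h0 | hpos
    · rw [h0, f_zero] at hfn
      simp [Prod.ext_iff] at hfn
      omega
    · obtain ⟨hprev, hprevin⟩ := back_step hall hpos le_rfl hfn
      simp only [stepB, opp, dirv] at hprev hprevin
      obtain ⟨a1, a2, a3, a4⟩ := hprevin
      simp only at a1 a2 a3 a4
      have ha' : asign k H (x - 1) ((k:ℤ) - 1 - 0) = false := by
        rw [show ((k:ℤ) - 1 - 0) = (k:ℤ) - 1 from by ring, asign_top hk]; simp; omega
      rw [ha'] at hprev
      simp only [partner] at hprev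
      rcases Nat.eq_zero_or_pos (n₀ - 1) with h1 | hpos1
      · rw [h1, f_zero] at hprev
        simp [Prod.ext_iff] at hprev
      · obtain ⟨hprev2, hprevin2⟩ := back_step hall hpos1 (by omega) hprev
        simp only [stepB, opp, dirv] at hprevin2
        obtain ⟨b1, b2, b3, b4⟩ := hprevin2
        simp only at b1 b2 b3 b4
        omega
  · -- true, rt : exit dn, y = -1, dead
    have hy : y = -1 := by
      simp only [stepF, hb, partner, opp, dirv, inR] at hout; push_neg at hout; omega
    subst hy
    have hbx : x % 2 = 0 := by rw [asign_bot] at hb; simpa using hb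
    rcases Nat.eq_zero_or_pos n₀ with h0 | hpos
    · rw [h0, f_zero] at hfn
      simp [Prod.ext_iff] at hfn
    · obtain ⟨hprev, hprevin⟩ := back_step hall hpos le_rfl hfn
      simp only [stepB, opp, dirv] at hprev hprevin
      obtain ⟨a1, a2, a3, a4⟩ := hprevin
      simp only at a1 a2 a3 a4
      have ha' : asign k H (x - -1) (-1 - 0) = false := by
        rw [show (-1 - 0 : ℤ) = -1 from rfl, asign_bot]; simp; omega
      rw [ha'] at hprev
      simp only [partner] at hprev
      rcases Nat.eq_zero_or_pos (n₀ - 1) with h1 | hpos1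
      · rw [h1, f_zero] at hprev
        simp [Prod.ext_iff] at hprev
      · obtain ⟨hprev2, hprevin2⟩ := back_step hall hpos1 (by omega) hprev
        simp only [stepB, opp, dirv] at hprevin2
        obtain ⟨b1, b2, b3, b4⟩ := hprevin2
        simp only at b1 b2 b3 b4
        omega
  · -- true, dn : exit rt, x = k-1
    have hx : x = (k:ℤ) - 1 := by
      simp only [stepF, hb, partner, opp, dirv, inR] at hout; push_neg at hout; omega
    subst hx
    by_cases hym : y = -1
    · subst hym
      rcases Nat.eq_zero_or_pos n₀ with h0 | hpos
      · rw [h0, f_zero] at hfn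
        simp [Prod.ext_iff] at hfn
      · obtain ⟨hprev, hprevin⟩ := back_step hall hpos le_rfl hfn
        simp only [stepB, opp, dirv] at hprevin
        obtain ⟨a1, a2, a3, a4⟩ := hprevin
        simp only at a1 a2 a3 a4
        omega
    · by_cases hyN : y = (k:ℤ) - 1
      · exfalso
        subst hyN
        rw [asign_top hk] at hb
        simp at hb
        omega
      · have hbx : (y + k) % 2 = 1 := by rw [asign_right hk hym hyN] at hb; simpa using hb
        by_cases hy0 : y = 0
        · -- OPENING #3 : column output
          subst hy0
          simp only [stepF, hb, partner, opp, dirv] at hIe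
          simp only [Inv, d1, d2] at hIe
          rcases hIe with ⟨hA, hB⟩ | ⟨hA, hB⟩
          · exfalso
            have := hApar _ hA
            simp only at this
            omega
          · exact Or.inr ⟨_, hA, by simp <;> omega⟩
        · rcases Nat.eq_zero_or_pos n₀ with h0 | hpos
          · rw [h0, f_zero] at hfn
            simp [Prod.ext_iff] at hfn
          · obtain ⟨hprev, hprevin⟩ := back_step hall hpos le_rfl hfn
            simp only [stepB, opp, dirv] at hprev hprevin
            have ha' : asign k H ((k:ℤ) - 1 - 0) (y - 1) = false := by
              rw [show ((k:ℤ) - 1 - 0) = (k:ℤ) - 1 from by ring,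
                asign_right hk (by omega) (by omega)]
              simp; omega
            rw [ha'] at hprev
            simp only [partner] at hprev
            rcases Nat.eq_zero_or_pos (n₀ - 1) with h1 | hpos1
            · rw [h1, f_zero] at hprev
              simp [Prod.ext_iff] at hprev
            · obtain ⟨hprev2, hprevin2⟩ := back_step hall hpos1 (by omega) hprev
              simp only [stepB, opp, dirv] at hprevin2
              obtain ⟨b1, b2, b3, b4⟩ := hprevin2
              simp only at b1 b2 b3 b4
              omega
  · -- true, up : exit lf, x = -1
    have hx : x = -1 := by
      simp only [stepF, hb, partner, opp, dirv, inR] at hout; push_neg at hout; omega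
    subst hx
    by_cases hym : y = -1
    · exfalso
      subst hym
      rw [asign_bot] at hb
      simp at hb
    · by_cases hyN : y = (k:ℤ) - 1
      · subst hyN
        rcases Nat.eq_zero_or_pos n₀ with h0 | hpos
        · rw [h0, f_zero] at hfn
          simp [Prod.ext_iff] at hfn
        · obtain ⟨hprev, hprevin⟩ := back_step hall hpos le_rfl hfn
          simp only [stepB, opp, dirv] at hprevin
          obtain ⟨a1, a2, a3, a4⟩ := hprevin
          simp only at a1 a2 a3 a4
          omega
      · have hbx : y % 2 = 1 := by rw [asign_left hk hym hyN] at hb; simpa using hb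
        by_cases hyk2 : y = (k:ℤ) - 2
        · -- OPENING #1 : row output
          subst hyk2
          simp only [stepF, hb, partner, opp, dirv] at hIe
          simp only [Inv, d1, d2] at hIe
          rcases hIe with ⟨hA, hB⟩ | ⟨hA, hB⟩
          · exact Or.inl ⟨_, hB, by simp; omega⟩
          · exfalso
            have := hApar _ hA
            simp only at this
            omega
        · rcases Nat.eq_zero_or_pos n₀ with h0 | hpos
          · rw [h0, f_zero] at hfn
            simp [Prod.ext_iff] at hfn
          · obtain ⟨hprev, hprevin⟩ := back_step hall hpos le_rfl hfn
            simp only [stepB, opp, dirv] at hprev hprevin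
            have ha' : asign k H (-1 - 0) (y - -1) = false := by
              rw [show (-1 - 0 : ℤ) = -1 from rfl, asign_left hk (by omega) (by omega)]
              simp; omega
            rw [ha'] at hprev
            simp only [partner] at hprev
            rcases Nat.eq_zero_or_pos (n₀ - 1) with h1 | hpos1
            · rw [h1, f_zero] at hprev
              simp [Prod.ext_iff] at hprev
              omega
            · obtain ⟨hprev2, hprevin2⟩ := back_step hall hpos1 (by omega) hprev
              simp only [stepB, opp, dirv] at hprevin2
              obtain ⟨b1, b2, b3, b4⟩ := hprevin2
              simp only at b1 b2 b3 b4
              omega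


lemma row_extract (hk : 2 ≤ k) (hH : IsDiagonalGraph k H) {v : ℤ × ℤ}
    (hr : (Haug k H).Reachable Bv v) (hv : (k:ℤ) - 1 ≤ v.2) :
    ∃ r a : Fin k × Fin k, (r.2 : ℕ) = 0 ∧ (a.2 : ℕ) = k - 1 ∧ H.Reachable r a := by
  obtain ⟨w0⟩ := hr
  suffices aux : ∀ (u : ℤ × ℤ) (_ : (Haug k H).Walk u v), (k:ℤ) - 1 ≤ v.2 →
      (u.1 + u.2) % 2 = 1 →
      (u.2 ≤ 0 ∨ ∃ r a : Fin k × Fin k, (r.2 : ℕ) = 0 ∧ ((a.1 : ℤ) = u.1 ∧ (a.2 : ℤ) = u.2) ∧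
        H.Reachable r a) →
      ∃ r a : Fin k × Fin k, (r.2 : ℕ) = 0 ∧ (a.2 : ℕ) = k - 1 ∧ H.Reachable r a by
    exact aux Bv w0 hv (by norm_num [Bv]) (Or.inl (by norm_num [Bv]))
  clear hv w0
  intro u w
  induction w with
  | nil =>
    intro hv _ hI
    rcases hI with hle | ⟨r, a, h0, ⟨e1, e2⟩, hra⟩
    · exfalso; omega
    · exact ⟨r, a, h0, by have := a.2.isLt; omega, hra⟩
  | @cons u u' v h p ih =>
    intro hv hpar hI
    replace ih := ih hv
    have hpar' : (u'.1 + u'.2) % 2 = 1 := by rw [← haug_adj_parity k H h]; exact hpar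
    rcases odd_adj hH h hpar with ⟨h1, h2⟩ | ⟨h1, h2⟩ | ⟨a, b, c1, c2, c3, c4, hab⟩
    · exact ih hpar' (Or.inl h2)
    · rcases hI with hle | ⟨r, a, h0, ⟨e1, e2⟩, hra⟩
      · exfalso; omega
      · exact ⟨r, a, h0, by have := a.2.isLt; omega, hra⟩
    · rcases hI with hle | ⟨r, a0, h0, ⟨e1, e2⟩, hra⟩
      · refine ih hpar' (Or.inr ⟨a, b, ?_, ⟨c3, c4⟩, hab.reachable⟩)
        omega
      · have hfa : a0 = a := by
          have q1 : (a0.1 : ℕ) = (a.1 : ℕ) := by omega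
          have q2 : (a0.2 : ℕ) = (a.2 : ℕ) := by omega
          exact Prod.ext (Fin.ext q1) (Fin.ext q2)
        have hab' : H.Adj a0 b := by rw [hfa]; exact hab
        exact ih hpar' (Or.inr ⟨r, b, h0, ⟨c3, c4⟩, hra.trans hab'.reachable⟩)

lemma col_extract (hk : 2 ≤ k) (hH : IsDiagonalGraph k H) {v : ℤ × ℤ}
    (hr : (Haug k H).Reachable Av v) (hv : (k:ℤ) - 1 ≤ v.1) :
    ∃ r a : Fin k × Fin k, (r.1 : ℕ) = 0 ∧ (a.1 : ℕ) = k - 1 ∧ H.Reachable r a := by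
  obtain ⟨w0⟩ := hr
  suffices aux : ∀ (u : ℤ × ℤ) (_ : (Haug k H).Walk u v), (k:ℤ) - 1 ≤ v.1 →
      (u.1 + u.2) % 2 = 0 →
      (u.1 ≤ 0 ∨ ∃ r a : Fin k × Fin k, (r.1 : ℕ) = 0 ∧ ((a.1 : ℤ) = u.1 ∧ (a.2 : ℤ) = u.2) ∧
        H.Reachable r a) →
      ∃ r a : Fin k × Fin k, (r.1 : ℕ) = 0 ∧ (a.1 : ℕ) = k - 1 ∧ H.Reachable r a by
    exact aux Av w0 hv (by norm_num [Av]) (Or.inl (by norm_num [Av]))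
  clear hv w0
  intro u w
  induction w with
  | nil =>
    intro hv _ hI
    rcases hI with hle | ⟨r, a, h0, ⟨e1, e2⟩, hra⟩
    · exfalso; omega
    · exact ⟨r, a, h0, by have := a.1.isLt; omega, hra⟩
  | @cons u u' v h p ih =>
    intro hv hpar hI
    replace ih := ih hv
    have hpar' : (u'.1 + u'.2) % 2 = 0 := by rw [← haug_adj_parity k H h]; exact hpar
    rcases even_adj hH h hpar with ⟨h1, h2⟩ | ⟨h1, h2⟩ | ⟨a, b, c1, c2, c3, c4, hab⟩
    · exact ih hpar' (Or.inl h2)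
    · rcases hI with hle | ⟨r, a, h0, ⟨e1, e2⟩, hra⟩
      · exfalso; omega
      · exact ⟨r, a, h0, by have := a.1.isLt; omega, hra⟩
    · rcases hI with hle | ⟨r, a0, h0, ⟨e1, e2⟩, hra⟩
      · refine ih hpar' (Or.inr ⟨a, b, ?_, ⟨c3, c4⟩, hab.reachable⟩)
        omega
      · have hfa : a0 = a := by
          have q1 : (a0.1 : ℕ) = (a.1 : ℕ) := by omega
          have q2 : (a0.2 : ℕ) = (a.2 : ℕ) := by omega
          exact Prod.ext (Fin.ext q1) (Fin.ext q2)
        have hab' : H.Adj a0 b := by rw [hfa]; exact hab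
        exact ih hpar' (Or.inr ⟨r, b, h0, ⟨c3, c4⟩, hra.trans hab'.reachable⟩)

lemma walk_ivt2 (hH : IsDiagonalGraph k H) {a b : Fin k × Fin k} (w : H.Walk a b) (t : ℕ)
    (h1 : (a.2 : ℕ) ≤ t) (h2 : t ≤ (b.2 : ℕ)) :
    ∃ c : Fin k × Fin k, H.Reachable a c ∧ (c.2 : ℕ) = t := by
  revert h1 h2
  induction w with
  | nil => intro h1 h2; exact ⟨_, Reachable.refl _, by omega⟩
  | @cons u u' v h p ih =>
    intro h1 h2
    by_cases he : (u.2 : ℕ) = t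
    · exact ⟨u, Reachable.refl _, he⟩
    · have hd := (hH.2 _ _ h).2
      obtain ⟨c, hc, ht⟩ := ih (by omega) h2
      exact ⟨c, h.reachable.trans hc, ht⟩

lemma walk_ivt1 (hH : IsDiagonalGraph k H) {a b : Fin k × Fin k} (w : H.Walk a b) (t : ℕ)
    (h1 : (a.1 : ℕ) ≤ t) (h2 : t ≤ (b.1 : ℕ)) :
    ∃ c : Fin k × Fin k, H.Reachable a c ∧ (c.1 : ℕ) = t := by
  revert h1 h2
  induction w with
  | nil => intro h1 h2; exact ⟨_, Reachable.refl _, by omega⟩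
  | @cons u u' v h p ih =>
    intro h1 h2
    by_cases he : (u.1 : ℕ) = t
    · exact ⟨u, Reachable.refl _, he⟩
    · have hd := (hH.2 _ _ h).1
      obtain ⟨c, hc, ht⟩ := ih (by omega) h2
      exact ⟨c, h.reachable.trans hc, ht⟩

end DiagProof

/-- Every diagonal graph on the `k × k` grid has a connected component containing at least
one vertex from every row, or a connected component containing at least one vertex from
every column.  (Row `j` is `{(i, j) : i}` and column `i` is `{(i, j) : j}`.) -/
theorem diagonal_graph_spanning_component (k : ℕ) (hk : 2 ≤ k)
    (H : SimpleGraph (Fin k × Fin k)) (hH : IsDiagonalGraph k H) :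
    (∃ v : Fin k × Fin k, ∀ j : Fin k, ∃ i : Fin k, H.Reachable v (i, j)) ∨
    (∃ v : Fin k × Fin k, ∀ i : Fin k, ∃ j : Fin k, H.Reachable v (i, j)) := by
  rcases DiagProof.exit_class (k := k) (H := H) hk with ⟨v, hv, hv2⟩ | ⟨v, hv, hv1⟩
  · left
    obtain ⟨r, a, h0, h1, hra⟩ := DiagProof.row_extract hk hH hv hv2
    refine ⟨r, fun j => ?_⟩
    obtain ⟨w⟩ := hra
    obtain ⟨c, hc, ht⟩ := DiagProof.walk_ivt2 hH w (j : ℕ) (by omega) (by have := j.isLt; omega)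
    have hcj : c.2 = j := Fin.ext ht
    exact ⟨c.1, by rw [← hcj]; exact hc⟩
  · right
    obtain ⟨r, a, h0, h1, hra⟩ := DiagProof.col_extract hk hH hv hv1
    refine ⟨r, fun i => ?_⟩
    obtain ⟨w⟩ := hra
    obtain ⟨c, hc, ht⟩ := DiagProof.walk_ivt1 hH w (i : ℕ) (by omega) (by have := i.isLt; omega)
    have hci : c.1 = i := Fin.ext ht
    exact ⟨c.2, by rw [← hci]; exact hc⟩
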